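/- Suppose ξ̃ satisfies the bilinear system, and let T₂⁻¹(f₂) := −ξ̃_{0,0,1}ξ̃_{1,0,0}/(ξ̃_{0,0,0}ξ̃_{1,0,1}) (the value of f₂ with all second indices shifted by −1). Then T₂⁻¹(f₂)·(a₁a₂f₁f₂ + x²q²) = q·f₁·(f₁f₂ + a₁a₂x²). -/

import Mathlib

noncomputable section

/-- The bilinear system (11)–(18) for a nowhere-vanishing `ξ̃ : ℤ³ → ℂ`. -/
def BilinearSystem (q a1 a2 x : ℂ) (ξ : ℤ → ℤ → ℤ → ℂ) : Prop :=
  ∀ a b c : ℤ,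
    (q ^ (a - b - c) / (a1 * a2) * ξ (a+1) (b+1) c * ξ a b (c+1) -
        x ^ 2 * q ^ c * ξ (a+1) (b+1) (c+1) * ξ a b c +
        a2 * x * q ^ b * ξ (a+1) b c * ξ a (b+1) (c+1) = 0) ∧
    (x ^ 2 * q ^ (a - b + 2*c) / (a1 * a2) * ξ (a+1) (b+1) c * ξ a b (c-1) -
        ξ (a+1) (b+1) (c-1) * ξ a b c +
        a2 * x * q ^ (b + c) * ξ (a+1) b c * ξ a (b+1) (c-1) = 0) ∧
    (a1 * a2 * x * q ^ (b + c) * ξ (a+1) (b+2) c * ξ a b (c-1) -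
        q ^ a * ξ (a+1) (b+1) (c-1) * ξ a (b+1) c +
        q ^ (a - b) / a2 * ξ (a+1) (b+1) c * ξ a (b+1) (c-1) = 0) ∧
    (a1 * a2 * q ^ (b - c) * ξ (a+1) (b+2) c * ξ a b (c+1) -
        x * q ^ a * ξ (a+1) (b+1) (c+1) * ξ a (b+1) c +
        x * q ^ (a - b) / a2 * ξ (a+1) (b+1) c * ξ a (b+1) (c+1) = 0) ∧
    (q ^ (a - c) * ξ (a+2) (b+1) c * ξ a b (c+1) -
        a1 * x ^ 2 * q ^ c * ξ (a+2) (b+1) (c+1) * ξ a b c +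
        a1 * a2 * x * q ^ b * ξ (a+1) (b+1) (c+1) * ξ (a+1) b c = 0) ∧
    (x ^ 2 * q ^ (a + c) * ξ (a+2) (b+1) c * ξ a b (c-1) -
        a1 * q ^ (-c) * ξ (a+2) (b+1) (c-1) * ξ a b c +
        a1 * a2 * x * q ^ b * ξ (a+1) (b+1) (c-1) * ξ (a+1) b c = 0) ∧
    (a1 * a2 * x * ξ a b c * ξ (a+1) (b+2) c -
        q ^ (2*a - 2*b - c) / (a1 * a2) * ξ (a+1) (b+1) c * ξ a (b+1) c +
        q ^ (2*a - b - c) / a1 * ξ a (b+1) (c+1) * ξ (a+1) (b+1) (c-1) = 0) ∧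
    (a1 * a2 * ξ a b c * ξ (a+1) (b+2) c -
        x * q ^ (2*a - 2*b + c) / (a1 * a2) * ξ (a+1) (b+1) c * ξ a (b+1) c +
        x * q ^ (2*a + 2*b + c) / a1 * ξ a (b+1) (c-1) * ξ (a+1) (b+1) (c+1) = 0)

theorem painleve_T2inv_f2 (q a1 a2 x : ℂ) (hq : q ≠ 0) (ha1 : a1 ≠ 0) (ha2 : a2 ≠ 0) (hx : x ≠ 0)
    (ξ : ℤ → ℤ → ℤ → ℂ) (hξ : ∀ a b c : ℤ, ξ a b c ≠ 0)
    (hbil : BilinearSystem q a1 a2 x ξ) (f1 f2 : ℂ)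
    (hf1 : f1 = ξ 0 0 1 * ξ 0 1 0 / (ξ 0 0 0 * ξ 0 1 1))
    (hf2 : f2 = -(ξ 0 1 1 * ξ 1 1 0) / (ξ 0 1 0 * ξ 1 1 1))
    (T2f2 : ℂ) (hT2f2 : T2f2 = -(ξ 0 0 1 * ξ 1 0 0) / (ξ 0 0 0 * ξ 1 0 1)) :
    T2f2 * (a1 * a2 * f1 * f2 + x ^ 2 * q ^ 2) = q * f1 * (f1 * f2 + a1 * a2 * x ^ 2) := by
  have n000 := hξ 0 0 0
  have n001 := hξ 0 0 1
  have n010 := hξ 0 1 0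
  have n011 := hξ 0 1 1
  have n100 := hξ 1 0 0
  have n101 := hξ 1 0 1
  have n110 := hξ 1 1 0
  have n111 := hξ 1 1 1
  have hA := (hbil 0 0 0).1
  have hB := (hbil 0 0 1).2.1
  norm_num [zpow_two] at hA hB
  have hA' : ξ 0 0 1 * ξ 1 1 0 - a1 * a2 * x ^ 2 * ξ 0 0 0 * ξ 1 1 1
      + a1 * a2 * a2 * x * ξ 1 0 0 * ξ 0 1 1 = 0 := by
    field_simp at hA
    linear_combination hA
  have hB' : x ^ 2 * q ^ 2 * ξ 0 0 0 * ξ 1 1 1 - a1 * a2 * ξ 0 0 1 * ξ 1 1 0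
      + a1 * a2 * a2 * x * q * ξ 1 0 1 * ξ 0 1 0 = 0 := by
    field_simp at hB
    linear_combination hB
  have key0 : a1 * a2 ^ 2 * x * (ξ 1 0 0 * ξ 0 1 1 *
        (a1 * a2 * ξ 0 0 1 * ξ 1 1 0 - x ^ 2 * q ^ 2 * ξ 0 0 0 * ξ 1 1 1)
      - q * ξ 1 0 1 * ξ 0 1 0 *
        (a1 * a2 * x ^ 2 * ξ 0 0 0 * ξ 1 1 1 - ξ 0 0 1 * ξ 1 1 0)) = 0 := by
    linear_combination (a1 * a2 * ξ 0 0 1 * ξ 1 1 0 - x ^ 2 * q ^ 2 * ξ 0 0 0 * ξ 1 1 1) * hA'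
      - (a1 * a2 * x ^ 2 * ξ 0 0 0 * ξ 1 1 1 - ξ 0 0 1 * ξ 1 1 0) * hB'
  have key : ξ 1 0 0 * ξ 0 1 1 *
        (a1 * a2 * ξ 0 0 1 * ξ 1 1 0 - x ^ 2 * q ^ 2 * ξ 0 0 0 * ξ 1 1 1)
      = q * ξ 1 0 1 * ξ 0 1 0 *
        (a1 * a2 * x ^ 2 * ξ 0 0 0 * ξ 1 1 1 - ξ 0 0 1 * ξ 1 1 0) := by
    have hne : a1 * a2 ^ 2 * x ≠ 0 :=
      mul_ne_zero (mul_ne_zero ha1 (pow_ne_zero 2 ha2)) hx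
    have := (mul_eq_zero.mp key0).resolve_left hne
    linear_combination this
  subst hf1 hf2 hT2f2
  field_simp
  linear_combination key

end
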